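/- arXiv:1005.1918 — 6 statements merged into one kernel-verified Lean document; each statement's English description precedes it below -/
import Mathlib

section
/- Let β₁ ≤ β₂ ≤ ... be reals with 1 ≤ β₁, and let B_T = Σ_{t=1}^T β_t. Then for any T ≥ 1, (1/β_T) Σ_{t=1}^T β_t √(β_t / B_t) ≤ 2 √(B_T / β_T). -/
open Finset

theorem stmt_0 (β : ℕ → ℝ) (hmono : Monotone β) (hβ1 : 1 ≤ β 1)
    (B : ℕ → ℝ) (hB : ∀ t, B t = ∑ s ∈ Finset.Icc 1 t, β s)
    (T : ℕ) (hT : 1 ≤ T) :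
    (1 / β T) * ∑ t ∈ Finset.Icc 1 T, β t * Real.sqrt (β t / B t)
      ≤ 2 * Real.sqrt (B T / β T) := by
  have hβpos : ∀ t, 1 ≤ t → (0:ℝ) < β t := fun t ht =>
    lt_of_lt_of_le one_pos (hβ1.trans (hmono ht))
  have hBpos : ∀ t, 1 ≤ t → 0 < B t := by
    intro t ht
    rw [hB]
    apply Finset.sum_pos
    · intro s hs
      exact hβpos s (Finset.mem_Icc.mp hs).1
    · exact ⟨1, Finset.mem_Icc.mpr ⟨le_refl 1, ht⟩⟩
  have key : ∀ n, 1 ≤ n →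
      ∑ t ∈ Finset.Icc 1 n, β t / Real.sqrt (B t) ≤ 2 * Real.sqrt (B n) := by
    intro n hn
    induction n, hn using Nat.le_induction with
    | base =>
      have hB1 : B 1 = β 1 := by rw [hB]; simp
      rw [Finset.Icc_self, Finset.sum_singleton, hB1, Real.div_sqrt]
      nlinarith [Real.sqrt_nonneg (β 1)]
    | succ n hn ih =>
      rw [Finset.sum_Icc_succ_top (by omega : 1 ≤ n + 1)]
      have hstep : B (n + 1) = B n + β (n + 1) := by
        rw [hB, hB, Finset.sum_Icc_succ_top (by omega : 1 ≤ n + 1)]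
      set a := Real.sqrt (B (n + 1)) with ha
      set b := Real.sqrt (B n) with hb
      have ha2 : a ^ 2 = B (n + 1) := Real.sq_sqrt (hBpos (n + 1) (by omega)).le
      have hb2 : b ^ 2 = B n := Real.sq_sqrt (hBpos n hn).le
      have hapos : 0 < a := Real.sqrt_pos.mpr (hBpos (n + 1) (by omega))
      have hbpos : 0 < b := Real.sqrt_pos.mpr (hBpos n hn)
      have hterm : β (n + 1) / a ≤ 2 * a - 2 * b := by
        rw [div_le_iff₀ hapos]
        nlinarith [sq_nonneg (a - b)]
      linarith [ih]
  have hβTpos : 0 < β T := hβpos T hT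
  have hsqβT : 0 < Real.sqrt (β T) := Real.sqrt_pos.mpr hβTpos
  have hsum : ∑ t ∈ Finset.Icc 1 T, β t * Real.sqrt (β t / B t)
      ≤ Real.sqrt (β T) * (2 * Real.sqrt (B T)) := by
    calc ∑ t ∈ Finset.Icc 1 T, β t * Real.sqrt (β t / B t)
        ≤ ∑ t ∈ Finset.Icc 1 T, Real.sqrt (β T) * (β t / Real.sqrt (B t)) := by
          apply Finset.sum_le_sum
          intro t ht
          obtain ⟨ht1, htT⟩ := Finset.mem_Icc.mp ht
          have hβt : 0 < β t := hβpos t ht1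
          have hBt : 0 < B t := hBpos t ht1
          rw [Real.sqrt_div hβt.le]
          have h1 : β t * (Real.sqrt (β t) / Real.sqrt (B t))
              = Real.sqrt (β t) * (β t / Real.sqrt (B t)) := by ring
          rw [h1]
          apply mul_le_mul_of_nonneg_right
          · exact Real.sqrt_le_sqrt (hmono htT)
          · positivity
      _ = Real.sqrt (β T) * ∑ t ∈ Finset.Icc 1 T, β t / Real.sqrt (B t) := by
          rw [Finset.mul_sum]
      _ ≤ Real.sqrt (β T) * (2 * Real.sqrt (B T)) := by
          apply mul_le_mul_of_nonneg_left (key T hT) hsqβT.le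
  have hfinal : (1 / β T) * (Real.sqrt (β T) * (2 * Real.sqrt (B T)))
      = 2 * Real.sqrt (B T / β T) := by
    rw [Real.sqrt_div (hBpos T hT).le]
    have hβeq : β T = Real.sqrt (β T) * Real.sqrt (β T) :=
      (Real.mul_self_sqrt hβTpos.le).symm
    rw [hβeq]
    field_simp
    linear_combination Real.sqrt (B T) * Real.sq_sqrt (sq_nonneg (Real.sqrt (β T)))
  calc (1 / β T) * ∑ t ∈ Finset.Icc 1 T, β t * Real.sqrt (β t / B t)
      ≤ (1 / β T) * (Real.sqrt (β T) * (2 * Real.sqrt (B T))) := by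
        apply mul_le_mul_of_nonneg_left hsum (by positivity)
    _ = 2 * Real.sqrt (B T / β T) := hfinal
end

section
/- Hoeffding-type inequality for the square loss: for all p ∈ [0,1], q ∈ ℝ, and μ ∈ (0,2], p·exp(μ((1−p)² − (1−q)²)) + (1−p)·exp(μ(p² − q²)) ≤ 1. -/
open Real

lemma hoeffding_bernoulli (p h : ℝ) (hp0 : 0 ≤ p) (hp1 : p ≤ 1) :
    p * exp (h * (1 - p)) + (1 - p) * exp (-(h * p)) ≤ exp (h ^ 2 / 8) := by
  set c := 1 - p with hc
  have hc0 : 0 ≤ c := by linarith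
  have hpos : ∀ x : ℝ, 0 < c + p * exp x := by
    intro x
    rcases hp0.eq_or_lt with h0 | h0
    · simp [← h0, hc]
    · exact add_pos_of_nonneg_of_pos hc0 (mul_pos h0 (exp_pos x))
  -- g is the derivative of D(x) = p*x + x^2/8 - log (c + p * exp x)
  set g : ℝ → ℝ := fun x => p + x / 4 - p * exp x / (c + p * exp x) with hg
  have hgderiv : ∀ x : ℝ, HasDerivAt g (1 / 4 - p * exp x * c / (c + p * exp x) ^ 2) x := by
    intro x
    have h1 : HasDerivAt (fun x => c + p * exp x) (p * exp x) x :=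
      ((Real.hasDerivAt_exp x).const_mul p).const_add c
    have h2 : HasDerivAt (fun x => p * exp x) (p * exp x) x :=
      (Real.hasDerivAt_exp x).const_mul p
    have h3 : HasDerivAt (fun x => p * exp x / (c + p * exp x))
        ((p * exp x * (c + p * exp x) - p * exp x * (p * exp x)) / (c + p * exp x) ^ 2) x :=
      h2.div h1 (hpos x).ne'
    have h4 : HasDerivAt (fun x : ℝ => p + x / 4) (1 / 4) x := by
      simpa using ((hasDerivAt_id x).div_const 4).const_add p
    have := h4.sub h3
    refine this.congr_deriv ?_
    field_simp
    ring
  have hgmono : Monotone g := by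
    apply monotone_of_deriv_nonneg
    · intro x
      exact (hgderiv x).differentiableAt
    · intro x
      rw [(hgderiv x).deriv]
      have hy : 0 ≤ p * exp x := mul_nonneg hp0 (exp_pos x).le
      have hden : 0 < (c + p * exp x) ^ 2 := pow_pos (hpos x) 2
      rw [sub_nonneg, div_le_iff₀ hden]
      nlinarith [sq_nonneg (c - p * exp x)]
  have hg0 : g 0 = 0 := by
    simp [hg, hc]
  -- D
  set D : ℝ → ℝ := fun x => p * x + x ^ 2 / 8 - Real.log (c + p * exp x) with hD
  have hDderiv : ∀ x : ℝ, HasDerivAt D (g x) x := by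
    intro x
    have h1 : HasDerivAt (fun x => c + p * exp x) (p * exp x) x :=
      ((Real.hasDerivAt_exp x).const_mul p).const_add c
    have h2 : HasDerivAt (fun x => Real.log (c + p * exp x))
        (p * exp x / (c + p * exp x)) x := h1.log (hpos x).ne'
    have h3 : HasDerivAt (fun x : ℝ => p * x + x ^ 2 / 8) (p + x / 4) x := by
      have := ((hasDerivAt_pow 2 x).div_const 8).const_add (p * x)
      have h4 : HasDerivAt (fun y : ℝ => p * y) p x := by
        simpa using (hasDerivAt_id x).const_mul p
      have := h4.add ((hasDerivAt_pow 2 x).div_const 8)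
      refine this.congr_deriv ?_
      ring
    exact h3.sub h2
  have hD0 : D 0 = 0 := by
    simp [hD, hc]
  have hDnonneg : ∀ x : ℝ, 0 ≤ D x := by
    intro x
    rcases le_total 0 x with hx | hx
    · have : MonotoneOn D (Set.Ici 0) := by
        apply monotoneOn_of_deriv_nonneg (convex_Ici 0)
        · exact (Differentiable.continuous (fun y => (hDderiv y).differentiableAt)).continuousOn
        · intro y hy
          exact (hDderiv y).differentiableAt.differentiableWithinAt
        · intro y hy
          rw [(hDderiv y).deriv]
          have : (0:ℝ) ≤ y := le_of_lt (by simpa using hy)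
          calc (0:ℝ) = g 0 := hg0.symm
            _ ≤ g y := hgmono this
      have := this (Set.self_mem_Ici) (Set.mem_Ici.mpr hx) hx
      linarith [hD0 ▸ this]
    · have : AntitoneOn D (Set.Iic 0) := by
        apply antitoneOn_of_deriv_nonpos (convex_Iic 0)
        · exact (Differentiable.continuous (fun y => (hDderiv y).differentiableAt)).continuousOn
        · intro y hy
          exact (hDderiv y).differentiableAt.differentiableWithinAt
        · intro y hy
          rw [(hDderiv y).deriv]
          have hy0 : y ≤ 0 := le_of_lt (by simpa using hy)
          calc g y ≤ g 0 := hgmono hy0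
            _ = 0 := hg0
      have := this (Set.mem_Iic.mpr hx) (Set.self_mem_Iic) hx
      linarith [hD0 ▸ this]
  have hkey : c + p * exp h ≤ exp (p * h + h ^ 2 / 8) := by
    have := hDnonneg h
    have hlog : Real.log (c + p * exp h) ≤ p * h + h ^ 2 / 8 := by
      simp only [hD] at this; linarith
    calc c + p * exp h = exp (Real.log (c + p * exp h)) := (exp_log (hpos h)).symm
      _ ≤ exp (p * h + h ^ 2 / 8) := exp_le_exp.mpr hlog
  have := mul_le_mul_of_nonneg_left hkey (exp_pos (-(p * h))).le
  calc p * exp (h * (1 - p)) + (1 - p) * exp (-(h * p))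
      = exp (-(p * h)) * (c + p * exp h) := by
        rw [hc, mul_add, show h * (1 - p) = -(p * h) + h from by ring, Real.exp_add,
          show -(h * p) = -(p * h) from by ring]
        ring
    _ ≤ exp (-(p * h)) * exp (p * h + h ^ 2 / 8) := this
    _ = exp (h ^ 2 / 8) := by rw [← Real.exp_add]; ring_nf

theorem stmt_7 (p q μ : ℝ) (hp0 : 0 ≤ p) (hp1 : p ≤ 1) (hμ0 : 0 < μ) (hμ2 : μ ≤ 2) :
    p * Real.exp (μ * ((1 - p) ^ 2 - (1 - q) ^ 2))
      + (1 - p) * Real.exp (μ * (p ^ 2 - q ^ 2)) ≤ 1 := by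
  set h := 2 * μ * (q - p) with hh
  have e1 : μ * ((1 - p) ^ 2 - (1 - q) ^ 2) = -(μ * (q - p) ^ 2) + h * (1 - p) := by
    rw [hh]; ring
  have e2 : μ * (p ^ 2 - q ^ 2) = -(μ * (q - p) ^ 2) + -(h * p) := by
    rw [hh]; ring
  have hb := hoeffding_bernoulli p h hp0 hp1
  have elhs : p * Real.exp (μ * ((1 - p) ^ 2 - (1 - q) ^ 2))
      + (1 - p) * Real.exp (μ * (p ^ 2 - q ^ 2))
      = Real.exp (-(μ * (q - p) ^ 2))
        * (p * Real.exp (h * (1 - p)) + (1 - p) * Real.exp (-(h * p))) := by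
    rw [e1, e2, Real.exp_add, Real.exp_add]; ring
  rw [elhs]
  have h1 : Real.exp (-(μ * (q - p) ^ 2)) * (p * Real.exp (h * (1 - p)) + (1 - p) * Real.exp (-(h * p)))
      ≤ Real.exp (-(μ * (q - p) ^ 2)) * Real.exp (h ^ 2 / 8) :=
    mul_le_mul_of_nonneg_left hb (Real.exp_pos _).le
  refine h1.trans ?_
  rw [← Real.exp_add]
  have : -(μ * (q - p) ^ 2) + h ^ 2 / 8 = μ * (q - p) ^ 2 * (μ / 2 - 1) := by rw [hh]; ring
  rw [this]
  have : μ * (q - p) ^ 2 * (μ / 2 - 1) ≤ 0 := by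
    apply mul_nonpos_of_nonneg_of_nonpos
    · positivity
    · linarith
  calc Real.exp (μ * (q - p) ^ 2 * (μ / 2 - 1)) ≤ Real.exp 0 := Real.exp_le_exp.mpr this
    _ = 1 := Real.exp_zero
end

section
/- Hoeffding's lemma for a Bernoulli variable: for all p ∈ [0,1] and h ∈ ℝ, p·e^{h(1−p)} + (1−p)·e^{−hp} ≤ e^{h²/8}. -/
open Real

theorem stmt_8 (p h : ℝ) (hp0 : 0 ≤ p) (hp1 : p ≤ 1) :
    p * Real.exp (h * (1 - p)) + (1 - p) * Real.exp (-h * p)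
      ≤ Real.exp (h ^ 2 / 8) := by
  set D : ℝ → ℝ := fun x => 1 - p + p * Real.exp x with hDdef
  have hDpos : ∀ x, 0 < D x := by
    intro x
    have he : 0 < Real.exp x := Real.exp_pos x
    rcases lt_or_eq_of_le hp1 with h1 | h1
    · have : 0 < 1 - p := by linarith
      have : 0 ≤ p * Real.exp x := mul_nonneg hp0 he.le
      simp only [hDdef]; linarith
    · subst h1; simpa [hDdef] using he
  set F : ℝ → ℝ := fun x => x ^ 2 / 8 + x * p - Real.log (D x) with hFdef
  set G : ℝ → ℝ := fun x => x / 4 + p - p * Real.exp x / D x with hGdef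
  have hD' : ∀ x, HasDerivAt D (p * Real.exp x) x := by
    intro x
    simpa [hDdef] using ((Real.hasDerivAt_exp x).const_mul p).const_add (1 - p)
  have hF' : ∀ x, HasDerivAt F (G x) x := by
    intro x
    have hlog : HasDerivAt (fun x => Real.log (D x)) (p * Real.exp x / D x) x :=
      (hD' x).log (hDpos x).ne'
    have h1 : HasDerivAt (fun x : ℝ => x ^ 2 / 8 + x * p)
        (x / 4 + p) x := by
      have := ((hasDerivAt_pow 2 x).div_const 8).add
        ((hasDerivAt_id x).mul_const p)
      refine this.congr_deriv ?_
      ring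
    exact h1.sub hlog
  have hG' : ∀ x, HasDerivAt G (1 / 4 - p * (1 - p) * Real.exp x / (D x) ^ 2) x := by
    intro x
    have hq : HasDerivAt (fun x => p * Real.exp x / D x)
        ((p * Real.exp x * D x - p * Real.exp x * (p * Real.exp x)) / (D x) ^ 2) x :=
      ((Real.hasDerivAt_exp x).const_mul p).div (hD' x) (hDpos x).ne'
    have h1 : HasDerivAt (fun x : ℝ => x / 4 + p) (1 / 4) x := by
      simpa using ((hasDerivAt_id x).div_const 4).add_const p
    have := h1.sub hq
    refine this.congr_deriv ?_
    have hDx := (hDpos x).ne'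
    simp only [hDdef]
    ring
  have hG'nonneg : ∀ x, 0 ≤ 1 / 4 - p * (1 - p) * Real.exp x / (D x) ^ 2 := by
    intro x
    have hD2 : 0 < (D x) ^ 2 := pow_pos (hDpos x) 2
    rw [sub_nonneg, div_le_iff₀ hD2]
    have hsq : 0 ≤ ((1 - p) - p * Real.exp x) ^ 2 := sq_nonneg _
    have he : 0 < Real.exp x := Real.exp_pos x
    simp only [hDdef]
    nlinarith [sq_nonneg ((1 - p) - p * Real.exp x)]
  have hGmono : Monotone G := by
    have hdiff : ∀ x, DifferentiableAt ℝ G x := fun x => (hG' x).differentiableAt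
    apply monotone_of_deriv_nonneg (fun x => hdiff x)
    intro x
    rw [(hG' x).deriv]
    exact hG'nonneg x
  have hG0 : G 0 = 0 := by
    simp [hGdef, hDdef]
  have hF0 : F 0 = 0 := by
    simp [hFdef, hDdef]
  have hFcont : Continuous F :=
    continuous_iff_continuousAt.mpr fun x => (hF' x).differentiableAt.continuousAt
  have hFnonneg : ∀ x, 0 ≤ F x := by
    intro x
    rcases le_or_gt 0 x with hx | hx
    · have hmono : MonotoneOn F (Set.Ici (0 : ℝ)) := by
        apply monotoneOn_of_deriv_nonneg (convex_Ici 0)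
          (Continuous.continuousOn hFcont)
        · intro y hy
          exact (hF' y).differentiableAt.differentiableWithinAt
        · intro y hy
          rw [(hF' y).deriv]
          have : G 0 ≤ G y := hGmono (by simpa using (interior_subset hy : y ∈ Set.Ici (0:ℝ)))
          linarith [hG0 ▸ this]
      have := hmono (Set.self_mem_Ici) (Set.mem_Ici.mpr hx) hx
      linarith [hF0 ▸ this]
    · have hanti : AntitoneOn F (Set.Iic (0 : ℝ)) := by
        apply antitoneOn_of_deriv_nonpos (convex_Iic 0)
          (Continuous.continuousOn hFcont)
        · intro y hy
          exact (hF' y).differentiableAt.differentiableWithinAt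
        · intro y hy
          rw [(hF' y).deriv]
          have hy0 : y ≤ 0 := Set.mem_Iic.mp (interior_subset hy)
          have : G y ≤ G 0 := hGmono hy0
          linarith [hG0 ▸ this]
      have := hanti (Set.mem_Iic.mpr hx.le) Set.self_mem_Iic hx.le
      linarith [hF0 ▸ this]
  -- conclude
  have hF := hFnonneg h
  have hlog : Real.log (D h) ≤ h ^ 2 / 8 + h * p := by
    simp only [hFdef] at hF; linarith
  have hDle : D h ≤ Real.exp (h ^ 2 / 8 + h * p) :=
    (Real.log_le_iff_le_exp (hDpos h)).mp hlog
  have key : p * Real.exp (h * (1 - p)) + (1 - p) * Real.exp (-h * p)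
      = Real.exp (-(h * p)) * D h := by
    simp only [hDdef]
    rw [show h * (1 - p) = -(h * p) + h by ring, Real.exp_add]
    ring_nf
  rw [key]
  calc Real.exp (-(h * p)) * D h
      ≤ Real.exp (-(h * p)) * Real.exp (h ^ 2 / 8 + h * p) := by
        exact mul_le_mul_of_nonneg_left hDle (Real.exp_pos _).le
    _ = Real.exp (h ^ 2 / 8) := by
        rw [← Real.exp_add]; ring_nf
end

section
/- Defensive property for the square loss: for any η with 0 < η ≤ 2/(Y₂−Y₁)², any p ∈ [0,1], any expert prediction ξ ∈ ℝ, and the forecast γ = p(Y₂−Y₁)+Y₁, it holds that p·exp(η((γ−Y₂)² − (ξ−Y₂)²)) + (1−p)·exp(η((γ−Y₁)² − (ξ−Y₁)²)) ≤ 1. -/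
open Real Set

lemma hoeffding_two_point (p t : ℝ) (hp0 : 0 ≤ p) (hp1 : p ≤ 1) :
    1 - p + p * Real.exp t ≤ Real.exp (p * t + t ^ 2 / 8) := by
  rcases eq_or_lt_of_le hp0 with h0 | h0
  · simp only [← h0]
    simpa using Real.one_le_exp (by nlinarith [sq_nonneg t] : (0:ℝ) ≤ 0 * t + t ^ 2 / 8)
  rcases eq_or_lt_of_le hp1 with h1 | h1
  · rw [h1]
    simpa using Real.exp_le_exp.2 (by nlinarith [sq_nonneg t] : t ≤ 1 * t + t ^ 2 / 8)
  -- 0 < p < 1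
  set a : ℝ → ℝ := fun s => 1 - p + p * Real.exp s with ha_def
  have ha : ∀ s, 0 < a s := fun s => by
    have := Real.exp_pos s
    simp only [ha_def]; nlinarith
  set q : ℝ → ℝ := fun s => p * Real.exp s / (1 - p + p * Real.exp s) with hq_def
  have hq0 : ∀ s, 0 < q s := fun s => by
    have := ha s; have := Real.exp_pos s
    apply div_pos (by positivity)
    simpa [ha_def] using ha s
  have hq1 : ∀ s, q s < 1 := fun s => by
    have h := ha s
    rw [hq_def]
    rw [div_lt_one (by simpa [ha_def] using h)]
    nlinarith [Real.exp_pos s]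
  have hqd : ∀ s, HasDerivAt q (q s * (1 - q s)) s := by
    intro s
    have hnum : HasDerivAt (fun s => p * Real.exp s) (p * Real.exp s) s :=
      (Real.hasDerivAt_exp s).const_mul p
    have hden : HasDerivAt (fun s => 1 - p + p * Real.exp s) (p * Real.exp s) s := by
      simpa using ((Real.hasDerivAt_exp s).const_mul p).const_add (1 - p)
    have hne : (1 - p + p * Real.exp s) ≠ 0 := ne_of_gt (by simpa [ha_def] using ha s)
    have := hnum.div hden hne
    have he := Real.exp_pos s
    refine this.congr_deriv ?_
    simp only [hq_def]
    field_simp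
  have hqvar : ∀ s, q s * (1 - q s) ≤ 1 / 4 := fun s => by
    nlinarith [sq_nonneg (q s - 1 / 2)]
  -- w s = p + s/4 - q s is monotone
  set w : ℝ → ℝ := fun s => p + s / 4 - q s with hw_def
  have hwd : ∀ s, HasDerivAt w (1 / 4 - q s * (1 - q s)) s := by
    intro s
    have h1 : HasDerivAt (fun s : ℝ => p + s / 4) (1 / 4) s := by
      simpa using ((hasDerivAt_id s).div_const 4).const_add p
    exact h1.sub (hqd s)
  have hwmono : Monotone w := by
    apply monotone_of_deriv_nonneg
    · exact fun s => (hwd s).differentiableAt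
    · intro s
      rw [(hwd s).deriv]
      linarith [hqvar s]
  have hw0 : w 0 = 0 := by
    simp [hw_def, hq_def]
  -- φ s = log (a s), ψ s = p s + s²/8 - φ s
  set φ : ℝ → ℝ := fun s => Real.log (1 - p + p * Real.exp s) with hφ_def
  have hφd : ∀ s, HasDerivAt φ (q s) s := by
    intro s
    have hden : HasDerivAt (fun s => 1 - p + p * Real.exp s) (p * Real.exp s) s := by
      simpa using ((Real.hasDerivAt_exp s).const_mul p).const_add (1 - p)
    have hne : (1 - p + p * Real.exp s) ≠ 0 := ne_of_gt (by simpa [ha_def] using ha s)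
    simpa [hq_def] using hden.log hne
  set ψ : ℝ → ℝ := fun s => p * s + s ^ 2 / 8 - φ s with hψ_def
  have hψd : ∀ s, HasDerivAt ψ (w s) s := by
    intro s
    have h1 : HasDerivAt (fun s : ℝ => p * s + s ^ 2 / 8) (p + s / 4) s := by
      have h2 : HasDerivAt (fun s : ℝ => p * s) p s := by
        simpa using (hasDerivAt_id s).const_mul p
      have h3 : HasDerivAt (fun s : ℝ => s ^ 2 / 8) (s / 4) s := by
        have := (hasDerivAt_pow 2 s).div_const 8
        exact this.congr_deriv (by norm_num; ring)
      exact h2.add h3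
    have := h1.sub (hφd s)
    exact this
  have hψ0 : ψ 0 = 0 := by simp [hψ_def, hφ_def]
  have hψcont : Continuous ψ := by
    have : Differentiable ℝ ψ := fun s => (hψd s).differentiableAt
    exact this.continuous
  have key : ∀ s, 0 ≤ ψ s := by
    intro s
    rcases le_total 0 s with hs | hs
    · have hmono : MonotoneOn ψ (Ici 0) := by
        apply monotoneOn_of_deriv_nonneg (convex_Ici 0) hψcont.continuousOn
        · intro x hx
          exact (hψd x).differentiableAt.differentiableWithinAt
        · intro x hx
          rw [(hψd x).deriv]
          have : (0:ℝ) ≤ x := le_of_lt (by simpa using hx)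
          calc (0:ℝ) = w 0 := hw0.symm
            _ ≤ w x := hwmono this
      have := hmono (by simp : (0:ℝ) ∈ Ici 0) (by simpa using hs) hs
      linarith [hψ0 ▸ this]
    · have hmono : AntitoneOn ψ (Iic 0) := by
        apply antitoneOn_of_deriv_nonpos (convex_Iic 0) hψcont.continuousOn
        · intro x hx
          exact (hψd x).differentiableAt.differentiableWithinAt
        · intro x hx
          rw [(hψd x).deriv]
          have : x ≤ (0:ℝ) := le_of_lt (by simpa using hx)
          calc w x ≤ w 0 := hwmono this
            _ = 0 := hw0
      have := hmono (by simpa using hs) (by simp : (0:ℝ) ∈ Iic 0) hs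
      linarith [hψ0 ▸ this]
  have hfin : φ t ≤ p * t + t ^ 2 / 8 := by
    have h := key t
    simp only [hψ_def] at h
    linarith
  calc 1 - p + p * Real.exp t = Real.exp (φ t) := by
        rw [hφ_def]
        exact (Real.exp_log (by simpa [ha_def] using ha t)).symm
    _ ≤ Real.exp (p * t + t ^ 2 / 8) := Real.exp_le_exp.2 hfin

theorem stmt_9 (Y₁ Y₂ η p ξ : ℝ) (hY : Y₁ < Y₂)
    (hη0 : 0 < η) (hη : η ≤ 2 / (Y₂ - Y₁) ^ 2)
    (hp0 : 0 ≤ p) (hp1 : p ≤ 1) :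
    p * Real.exp (η * ((p * (Y₂ - Y₁) + Y₁ - Y₂) ^ 2 - (ξ - Y₂) ^ 2))
      + (1 - p) * Real.exp (η * ((p * (Y₂ - Y₁) + Y₁ - Y₁) ^ 2 - (ξ - Y₁) ^ 2)) ≤ 1 := by
  set d : ℝ := Y₂ - Y₁ with hd_def
  have hd : 0 < d := by simp [hd_def]; linarith
  set u : ℝ := ξ - (p * d + Y₁) with hu_def
  set t : ℝ := 2 * η * u * d with ht_def
  have hηd : η * d ^ 2 ≤ 2 := by
    rw [le_div_iff₀ (by positivity)] at hη
    linarith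
  have hE1 : η * ((p * (Y₂ - Y₁) + Y₁ - Y₂) ^ 2 - (ξ - Y₂) ^ 2)
      = (-(η * u ^ 2) - p * t) + t := by
    simp only [ht_def, hu_def, hd_def]; ring
  have hE2 : η * ((p * (Y₂ - Y₁) + Y₁ - Y₁) ^ 2 - (ξ - Y₁) ^ 2)
      = -(η * u ^ 2) - p * t := by
    simp only [ht_def, hu_def, hd_def]; ring
  rw [hE1, hE2, Real.exp_add]
  have hkey := hoeffding_two_point p t hp0 hp1
  have hepos : 0 < Real.exp (-(η * u ^ 2) - p * t) := Real.exp_pos _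
  have step1 : p * (Real.exp (-(η * u ^ 2) - p * t) * Real.exp t)
      + (1 - p) * Real.exp (-(η * u ^ 2) - p * t)
      = Real.exp (-(η * u ^ 2) - p * t) * (1 - p + p * Real.exp t) := by ring
  rw [step1]
  have step2 : Real.exp (-(η * u ^ 2) - p * t) * (1 - p + p * Real.exp t)
      ≤ Real.exp (-(η * u ^ 2) - p * t) * Real.exp (p * t + t ^ 2 / 8) :=
    mul_le_mul_of_nonneg_left hkey (le_of_lt hepos)
  have step3 : Real.exp (-(η * u ^ 2) - p * t) * Real.exp (p * t + t ^ 2 / 8)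
      = Real.exp (t ^ 2 / 8 - η * u ^ 2) := by
    rw [← Real.exp_add]; ring_nf
  have gen : ∀ A B : ℝ, 0 ≤ A → B ≤ 2 → A * B / 2 - A ≤ 0 := by
    intro A B hA hB; nlinarith
  have step4 : t ^ 2 / 8 - η * u ^ 2 ≤ 0 := by
    have h1 : t ^ 2 / 8 - η * u ^ 2 = η * u ^ 2 * (η * d ^ 2) / 2 - η * u ^ 2 := by
      simp only [ht_def]; ring
    rw [h1]
    exact gen _ _ (by positivity) hηd
  calc Real.exp (-(η * u ^ 2) - p * t) * (1 - p + p * Real.exp t)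
      ≤ Real.exp (t ^ 2 / 8 - η * u ^ 2) := by rw [← step3]; exact step2
    _ ≤ 1 := Real.exp_le_one_iff.2 step4
end

section
/- Convexity interpolation for square loss differences: for any ζ₁, ζ₂ ∈ ℝ, any Y₁ ≤ y ≤ Y₂ with y = u·Y₂ + (1−u)·Y₁ for u ∈ [0,1], and any η ≥ 0, exp(η((ζ₁−y)² − (ζ₂−y)²)) ≤ u·exp(η((ζ₁−Y₂)² − (ζ₂−Y₂)²)) + (1−u)·exp(η((ζ₁−Y₁)² − (ζ₂−Y₁)²)). -/
theorem stmt_10 (ζ₁ ζ₂ Y₁ Y₂ η u y : ℝ) (hη : 0 ≤ η)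
    (hu0 : 0 ≤ u) (hu1 : u ≤ 1) (hy : y = u * Y₂ + (1 - u) * Y₁) :
    Real.exp (η * ((ζ₁ - y) ^ 2 - (ζ₂ - y) ^ 2))
      ≤ u * Real.exp (η * ((ζ₁ - Y₂) ^ 2 - (ζ₂ - Y₂) ^ 2))
        + (1 - u) * Real.exp (η * ((ζ₁ - Y₁) ^ 2 - (ζ₂ - Y₁) ^ 2)) := by
  have key : η * ((ζ₁ - y) ^ 2 - (ζ₂ - y) ^ 2)
      = u * (η * ((ζ₁ - Y₂) ^ 2 - (ζ₂ - Y₂) ^ 2))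
        + (1 - u) * (η * ((ζ₁ - Y₁) ^ 2 - (ζ₂ - Y₁) ^ 2)) := by
    subst hy; ring
  rw [key]
  have := convexOn_exp.2 (Set.mem_univ (η * ((ζ₁ - Y₂) ^ 2 - (ζ₂ - Y₂) ^ 2)))
    (Set.mem_univ (η * ((ζ₁ - Y₁) ^ 2 - (ζ₂ - Y₁) ^ 2))) hu0 (sub_nonneg.2 hu1) (add_sub_cancel u 1)
  simpa using this
end

section
/- Determinant–trace bound: if K is a symmetric positive semidefinite T×T real matrix with diagonal entries K_{tt} ≤ c², W = diag(β₁/β_T,...,β_T/β_T) with 0 < β₁ ≤ ... ≤ β_T, and a > 0, then ln det(I + (1/a)√W·K·√W) ≤ (c²/a)·(Σ_{t=1}^T β_t)/β_T. -/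
open Matrix in
lemma aux_trace_eq_sum_eigenvalues {n : Type*} [Fintype n] [DecidableEq n]
    {A : Matrix n n ℝ} (hA : A.IsHermitian) :
    A.trace = ∑ i, hA.eigenvalues i := by
  nth_rewrite 1 [hA.spectral_theorem]
  rw [Unitary.conjStarAlgAut_apply]
  rw [Matrix.trace_mul_cycle]
  rw [show (star (hA.eigenvectorUnitary : Matrix n n ℝ)) * (hA.eigenvectorUnitary : Matrix n n ℝ)
      = 1 from Unitary.coe_star_mul_self _]
  simp [Matrix.trace_diagonal]

open Matrix in
lemma aux_smul_posSemidef {n : Type*} [Fintype n] {A : Matrix n n ℝ}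
    (hA : A.PosSemidef) {c : ℝ} (hc : 0 ≤ c) : (c • A).PosSemidef := by
  refine ⟨?_, fun x => ?_⟩
  · unfold Matrix.IsHermitian
    rw [Matrix.conjTranspose_smul, hA.1.eq]
    simp
  · exact (hA.smul hc).2 x

open Matrix in
theorem stmt_18 (T : ℕ) (hT : 1 ≤ T) (K : Matrix (Fin T) (Fin T) ℝ)
    (hK : K.PosSemidef) (c a : ℝ) (ha : 0 < a)
    (hdiag : ∀ t, K t t ≤ c ^ 2)
    (β : ℕ → ℝ) (hβpos : ∀ t, 0 < β t) (hβmono : Monotone β) :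
    Real.log (Matrix.det
        ((1 : Matrix (Fin T) (Fin T) ℝ) + (1 / a) •
          (Matrix.diagonal (fun i : Fin T => Real.sqrt (β (i.val + 1) / β T)) * K *
            Matrix.diagonal (fun i : Fin T => Real.sqrt (β (i.val + 1) / β T)))))
      ≤ (c ^ 2 / a) * (∑ t ∈ Finset.Icc 1 T, β t) / β T := by
  set w : Fin T → ℝ := fun i => β (i.val + 1) / β T with hw
  have hwnonneg : ∀ i, 0 ≤ w i := fun i => div_nonneg (hβpos _).le (hβpos _).le
  set D : Matrix (Fin T) (Fin T) ℝ := Matrix.diagonal (fun i => Real.sqrt (w i)) with hD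
  set B : Matrix (Fin T) (Fin T) ℝ := (1 / a) • (D * K * D) with hB
  have hDH : Dᴴ = D := by
    rw [hD, Matrix.diagonal_conjTranspose]
    simp
  have hBpsd : B.PosSemidef := by
    apply aux_smul_posSemidef _ (by positivity)
    have := hK.mul_mul_conjTranspose_same D
    rwa [hDH] at this
  have hM : ((1 : Matrix (Fin T) (Fin T) ℝ) + B).PosDef :=
    Matrix.PosDef.add_posSemidef Matrix.PosDef.one hBpsd
  set M := (1 : Matrix (Fin T) (Fin T) ℝ) + B with hMdef
  -- det = product of eigenvalues
  have hdet : M.det = ∏ i, hM.isHermitian.eigenvalues i := by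
    have := hM.isHermitian.det_eq_prod_eigenvalues
    simpa using this
  have hpos : ∀ i, 0 < hM.isHermitian.eigenvalues i := hM.eigenvalues_pos
  have hlog : Real.log M.det = ∑ i, Real.log (hM.isHermitian.eigenvalues i) := by
    rw [hdet]
    exact Real.log_prod (fun i _ => (hpos i).ne')
  have hstep1 : Real.log M.det ≤ B.trace := by
    rw [hlog]
    have htr : M.trace = (T : ℝ) + B.trace := by
      rw [hMdef, Matrix.trace_add, Matrix.trace_one]
      simp
    have hsum : ∑ i, hM.isHermitian.eigenvalues i = M.trace :=
      (aux_trace_eq_sum_eigenvalues hM.isHermitian).symm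
    calc ∑ i, Real.log (hM.isHermitian.eigenvalues i)
        ≤ ∑ i, (hM.isHermitian.eigenvalues i - 1) :=
          Finset.sum_le_sum (fun i _ => Real.log_le_sub_one_of_pos (hpos i))
      _ = M.trace - T := by
          rw [Finset.sum_sub_distrib, hsum]
          simp
      _ = B.trace := by rw [htr]; ring
  -- compute trace of B
  have htrB : B.trace = (1 / a) * ∑ i, w i * K i i := by
    rw [hB, Matrix.trace_smul, smul_eq_mul]
    congr 1
    rw [Matrix.trace]
    apply Finset.sum_congr rfl
    intro i _
    simp only [Matrix.diag_apply, Matrix.mul_diagonal, Matrix.diagonal_mul, hD]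
    rw [mul_comm (Real.sqrt (w i)) (K i i), mul_assoc, Real.mul_self_sqrt (hwnonneg i)]
    ring
  have hsumIcc : ∑ i : Fin T, β (i.val + 1) = ∑ t ∈ Finset.Icc 1 T, β t := by
    rw [Fin.sum_univ_eq_sum_range (fun i => β (i + 1)) T]
    rw [← Finset.Ico_add_one_right_eq_Icc, Finset.sum_Ico_eq_sum_range]
    simp [add_comm]
  have hstep2 : B.trace ≤ (c ^ 2 / a) * (∑ t ∈ Finset.Icc 1 T, β t) / β T := by
    rw [htrB]
    have h1 : ∑ i, w i * K i i ≤ ∑ i, w i * c ^ 2 :=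
      Finset.sum_le_sum (fun i _ => mul_le_mul_of_nonneg_left (hdiag i) (hwnonneg i))
    have h2 : (1 / a) * ∑ i, w i * K i i ≤ (1 / a) * ∑ i, w i * c ^ 2 :=
      mul_le_mul_of_nonneg_left h1 (by positivity)
    refine h2.trans_eq ?_
    rw [← Finset.sum_mul, hw]
    simp only
    rw [← Finset.sum_div, hsumIcc]
    field_simp
  exact hstep1.trans hstep2
end
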